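/- Let n ≥ 1, let α, β, β' ∈ ℂⁿ and κ, κ' ∈ ℂ. Let L and L' be n×n matrices over ℂ((z)), both of order ≥ −1, with L_{−1} = α·βᵀ, L'_{−1} = α·β'ᵀ, βᵀα = 0, β'ᵀα = 0, L_0·α = κ·α and L'_0·α = κ'·α. Then the product L·L' again has order ≥ −1, and there exist β'' ∈ ℂⁿ and κ'' ∈ ℂ such that (L·L')_{−1} = α·β''ᵀ with β''ᵀα = 0, and (L·L')_0·α = κ''·α. (This is the assertion that for g = gl(n) the space of Lax operators is also closed under pointwise multiplication, localized at a Tyurin point γ.) -/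
import Mathlib


open Matrix

/-- The matrix of `z^k`-coefficients of a matrix of formal Laurent series. -/
noncomputable def coeffM {n : ℕ} (A : Matrix (Fin n) (Fin n) (LaurentSeries ℂ)) (k : ℤ) :
    Matrix (Fin n) (Fin n) ℂ :=
  fun i j => (A i j).coeff k

/-- `A` has order `≥ m`: all coefficients below `m` vanish. -/
def ordGE {n : ℕ} (A : Matrix (Fin n) (Fin n) (LaurentSeries ℂ)) (m : ℤ) : Prop :=
  ∀ k : ℤ, k < m → coeffM A k = 0

lemma coeff_mul_ord (x y : LaurentSeries ℂ)
    (hx : ∀ a : ℤ, a < -1 → x.coeff a = 0) (hy : ∀ a : ℤ, a < -1 → y.coeff a = 0) (k : ℤ) :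
    (x * y).coeff k = ∑ a ∈ Finset.Icc (-1 : ℤ) (k + 1), x.coeff a * y.coeff (k - a) := by
  rw [HahnSeries.coeff_mul]
  have hinj : Set.InjOn (fun a : ℤ => (a, k - a)) (Finset.Icc (-1 : ℤ) (k + 1)) := by
    intro a _ b _ h
    simpa using congrArg Prod.fst h
  rw [← Finset.sum_image (f := fun ij : ℤ × ℤ => x.coeff ij.1 * y.coeff ij.2) hinj]
  apply Finset.sum_subset
  · intro ij hij
    rw [Finset.mem_addAntidiagonal] at hij
    obtain ⟨h1, h2, h3⟩ := hij
    rw [Finset.mem_image]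
    refine ⟨ij.1, ?_, ?_⟩
    · rw [Finset.mem_Icc]
      constructor
      · by_contra h; push_neg at h
        exact h1 (hx _ (by omega))
      · by_contra h; push_neg at h
        exact h2 (hy _ (by omega))
    · exact Prod.ext rfl (by omega)
  · intro ij hmem hnot
    rw [Finset.mem_image] at hmem
    obtain ⟨a, ha, rfl⟩ := hmem
    rw [Finset.mem_addAntidiagonal] at hnot
    by_cases h1 : x.coeff a = 0
    · simp [h1]
    · by_cases h2 : y.coeff (k - a) = 0
      · simp [h2]
      · exact absurd ⟨h1, h2, by omega⟩ hnot

lemma coeffM_mul {n : ℕ} (L L' : Matrix (Fin n) (Fin n) (LaurentSeries ℂ))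
    (hL : ordGE L (-1)) (hL' : ordGE L' (-1)) (k : ℤ) :
    coeffM (L * L') k = ∑ a ∈ Finset.Icc (-1 : ℤ) (k + 1), coeffM L a * coeffM L' (k - a) := by
  ext i j
  have hent : ∀ (a : ℤ) (i l : Fin n), a < -1 → (L i l).coeff a = 0 :=
    fun a i l ha => congrFun (congrFun (hL a ha) i) l
  have hent' : ∀ (a : ℤ) (i l : Fin n), a < -1 → (L' i l).coeff a = 0 :=
    fun a i l ha => congrFun (congrFun (hL' a ha) i) l
  show ((L * L') i j).coeff k = _
  rw [Matrix.mul_apply]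
  rw [show ((∑ l, L i l * L' l j).coeff k) = ∑ l, (L i l * L' l j).coeff k from
    map_sum (HahnSeries.coeff.addMonoidHom k) _ _]
  rw [Finset.sum_congr rfl fun l _ =>
    coeff_mul_ord (L i l) (L' l j) (fun a ha => hent a i l ha) (fun a ha => hent' a l j ha) k]
  rw [Finset.sum_comm]
  simp [coeffM, Matrix.sum_apply, Matrix.mul_apply]

lemma vmv_mul {n : ℕ} (a b : Fin n → ℂ) (M : Matrix (Fin n) (Fin n) ℂ) :
    vecMulVec a b * M = vecMulVec a (b ᵥ* M) := by
  ext i j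
  simp only [Matrix.mul_apply, vecMulVec_apply, Matrix.vecMul, dotProduct, Finset.mul_sum]
  exact Finset.sum_congr rfl fun l _ => by ring

lemma mul_vmv {n : ℕ} (a b : Fin n → ℂ) (M : Matrix (Fin n) (Fin n) ℂ) :
    M * vecMulVec a b = vecMulVec (M *ᵥ a) b := by
  ext i j
  simp only [Matrix.mul_apply, vecMulVec_apply, Matrix.mulVec, dotProduct, Finset.sum_mul]
  exact Finset.sum_congr rfl fun l _ => by ring

lemma vmv_mulVec {n : ℕ} (a b v : Fin n → ℂ) :
    (vecMulVec a b) *ᵥ v = (b ⬝ᵥ v) • a := by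
  ext i
  simp only [Matrix.mulVec, dotProduct, vecMulVec_apply, Pi.smul_apply, smul_eq_mul,
    Finset.sum_mul]
  exact Finset.sum_congr rfl fun l _ => by ring

lemma vmv_mul_vmv {n : ℕ} (a b a' b' : Fin n → ℂ) (h : b ⬝ᵥ a' = 0) :
    vecMulVec a b * vecMulVec a' b' = 0 := by
  ext i j
  simp only [Matrix.mul_apply, vecMulVec_apply, Matrix.zero_apply]
  have : ∀ l ∈ Finset.univ, a i * b l * (a' l * b' j) = (a i * b' j) * (b l * a' l) :=
    fun l _ => by ring
  rw [Finset.sum_congr rfl this, ← Finset.mul_sum]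
  have h0 : ∑ l, b l * a' l = 0 := h
  rw [h0, mul_zero]

theorem lax_gl_product_closed (n : ℕ) (hn : 1 ≤ n)
    (α β β' : Fin n → ℂ) (κ κ' : ℂ)
    (L L' : Matrix (Fin n) (Fin n) (LaurentSeries ℂ))
    (hLord : ordGE L (-1)) (hL'ord : ordGE L' (-1))
    (hLm1 : coeffM L (-1) = vecMulVec α β)
    (hL'm1 : coeffM L' (-1) = vecMulVec α β')
    (hβα : β ⬝ᵥ α = 0) (hβ'α : β' ⬝ᵥ α = 0)
    (hL0 : (coeffM L 0).mulVec α = κ • α)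
    (hL'0 : (coeffM L' 0).mulVec α = κ' • α) :
    ordGE (L * L') (-1) ∧
    ∃ (β'' : Fin n → ℂ) (κ'' : ℂ),
      coeffM (L * L') (-1) = vecMulVec α β'' ∧
      β'' ⬝ᵥ α = 0 ∧
      (coeffM (L * L') 0).mulVec α = κ'' • α := by
  have key := coeffM_mul L L' hLord hL'ord
  constructor
  · intro k hk
    rw [key k]
    rcases eq_or_lt_of_le (show k ≤ -2 by omega) with hk2 | hk2
    · subst hk2
      rw [show (-2 : ℤ) + 1 = -1 from rfl, Finset.Icc_self, Finset.sum_singleton]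
      rw [show (-2 : ℤ) - (-1) = -1 by norm_num, hLm1, hL'm1]
      exact vmv_mul_vmv α β α β' hβα
    · rw [Finset.Icc_eq_empty (by omega), Finset.sum_empty]
  · refine ⟨β ᵥ* (coeffM L' 0) + κ • β', β ⬝ᵥ ((coeffM L' 1) *ᵥ α) + κ' * κ, ?_, ?_, ?_⟩
    · rw [key (-1)]
      rw [show Finset.Icc (-1 : ℤ) ((-1) + 1) = {-1, 0} by ext x; simp; omega]
      rw [Finset.sum_insert (by decide), Finset.sum_singleton]
      rw [show (-1 : ℤ) - (-1) = 0 by norm_num, show (-1 : ℤ) - 0 = -1 by norm_num,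
        hLm1, hL'm1, vmv_mul, mul_vmv, hL0]
      ext i j
      simp [vecMulVec_apply]
      ring
    · rw [add_dotProduct, smul_dotProduct, hβ'α, ← Matrix.dotProduct_mulVec, hL'0]
      simp [hβα]
    · rw [key 0]
      rw [show Finset.Icc (-1 : ℤ) (0 + 1) = {-1, 0, 1} by ext x; simp; omega]
      rw [Finset.sum_insert (by decide), Finset.sum_insert (by decide), Finset.sum_singleton]
      rw [show (0 : ℤ) - (-1) = 1 by norm_num, show (0 : ℤ) - 0 = 0 from rfl,
        show (0 : ℤ) - 1 = -1 by norm_num, hLm1, hL'm1]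
      rw [Matrix.add_mulVec, Matrix.add_mulVec]
      rw [← Matrix.mulVec_mulVec, ← Matrix.mulVec_mulVec, ← Matrix.mulVec_mulVec]
      rw [vmv_mulVec, vmv_mulVec, hβ'α, zero_smul, Matrix.mulVec_zero, hL'0,
        Matrix.mulVec_smul, hL0]
      rw [add_zero, smul_smul, add_smul]
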